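/- Let m, n, p be positive natural numbers, let U ∈ ℝ^{m×p} and X ∈ ℝ^{n×p} be real matrices such that the stacked matrix [Uᵀ, Xᵀ]ᵀ ∈ ℝ^{(m+n)×p} has full row rank m+n, and let Π ∈ ℝ^{p×p} be the matrix of the orthogonal projection of ℝ^p (with the standard inner product) onto the kernel of X, i.e. Π is symmetric, idempotent, its range is {v ∈ ℝ^p : Xv = 0}, and its kernel is the row space of X. Then the matrix M = U Π Uᵀ ∈ ℝ^{m×m} is symmetric positive definite. -/

import Mathlib

noncomputable section

open Matrix

/-- If the stacked matrix `[Uᵀ, Xᵀ]ᵀ` has full row rank `m + n` and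
`Pr` is the orthogonal projection of `ℝ^p` onto the kernel of `X` (symmetric, idempotent,
with range `{v | X v = 0}` and kernel the row space of `X`), then `M = U Pr Uᵀ` is
symmetric positive definite. -/
theorem stmt0 (m n p : ℕ) (hm : 0 < m) (hn : 0 < n) (hp : 0 < p)
    (U : Matrix (Fin m) (Fin p) ℝ) (X : Matrix (Fin n) (Fin p) ℝ)
    (hrank : (Matrix.fromRows U X).rank = m + n)
    (Pr : Matrix (Fin p) (Fin p) ℝ)
    (hsym : Prᵀ = Pr)
    (hidem : Pr * Pr = Pr)
    (hrange_sub : X * Pr = 0)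
    (hrange_sup : ∀ v : Fin p → ℝ, X.mulVec v = 0 → Pr.mulVec v = v)
    (hker : ∀ v : Fin p → ℝ, Pr.mulVec v = 0 → ∃ w : Fin n → ℝ, v = Xᵀ.mulVec w) :
    (U * Pr * Uᵀ).PosDef := by
  -- injectivity of the transpose of the stacked matrix
  have key : ∀ v : (Fin m ⊕ Fin n) → ℝ,
      (Matrix.fromRows U X)ᵀ.mulVec v = 0 → v = 0 := by
    intro v hv
    set A := (Matrix.fromRows U X)ᵀ with hA
    have hrt : A.rank = m + n := by rw [hA, Matrix.rank_transpose]; exact hrank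
    have h1 := LinearMap.finrank_range_add_finrank_ker A.mulVecLin
    have hdom : Module.finrank ℝ ((Fin m ⊕ Fin n) → ℝ) = m + n := by simp
    have hr : Module.finrank ℝ (LinearMap.range A.mulVecLin) = m + n := hrt
    rw [hdom, hr] at h1
    have hk0 : Module.finrank ℝ (LinearMap.ker A.mulVecLin) = 0 := by omega
    have hbot : LinearMap.ker A.mulVecLin = ⊥ := Submodule.finrank_eq_zero.mp hk0
    have hv' : v ∈ LinearMap.ker A.mulVecLin := by
      simpa [Matrix.mulVecLin_apply] using hv
    rw [hbot] at hv'
    simpa using hv'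
  rw [Matrix.posDef_iff_dotProduct_mulVec]
  constructor
  · unfold Matrix.IsHermitian
    rw [Matrix.conjTranspose_eq_transpose_of_trivial]
    rw [Matrix.transpose_mul, Matrix.transpose_mul, Matrix.transpose_transpose, hsym,
      Matrix.mul_assoc]
  · intro x hx
    set z := Uᵀ.mulVec x with hz
    set w := Pr.mulVec z with hw
    have hq : dotProduct (star x) ((U * Pr * Uᵀ) *ᵥ x) = dotProduct w w := by
      have h1 : (U * Pr * Uᵀ) *ᵥ x = U *ᵥ w := by
        rw [hw, hz]
        simp [Matrix.mulVec_mulVec, Matrix.mul_assoc]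
      rw [h1]
      have h2 : dotProduct x (U *ᵥ w) = dotProduct z w := by
        rw [Matrix.dotProduct_mulVec, hz, Matrix.mulVec_transpose]
      have h3 : dotProduct z w = dotProduct w w := by
        have hww : Pr *ᵥ w = w := by
          simp only [hw, Matrix.mulVec_mulVec, hidem]
        calc dotProduct z w = dotProduct z (Pr *ᵥ w) := by rw [hww]
          _ = dotProduct (Prᵀ *ᵥ z) w := by
              rw [Matrix.dotProduct_mulVec, Matrix.mulVec_transpose]
          _ = dotProduct w w := by rw [hsym, ← hw]
      simp only [star_trivial]
      rw [h2, h3]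
    rw [hq]
    have hwne : w ≠ 0 := by
      intro hw0
      obtain ⟨wn, hwn⟩ := hker z (by rw [← hw]; exact hw0)
      -- z = Uᵀ x = Xᵀ wn, so (fromRows U X)ᵀ kills Sum.elim x (-wn)
      have : (Matrix.fromRows U X)ᵀ.mulVec (Sum.elim x (-wn)) = 0 := by
        rw [Matrix.transpose_fromRows, Matrix.fromCols_mulVec_sumElim]
        rw [← hz, hwn]
        simp [Matrix.mulVec_neg]
      have h0 := key _ this
      apply hx
      ext i
      have := congrFun h0 (Sum.inl i)
      simpa using this
    have hnn : 0 ≤ dotProduct w w := Finset.sum_nonneg fun i _ => mul_self_nonneg _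
    exact lt_of_le_of_ne hnn fun h => hwne ((dotProduct_self_eq_zero).mp h.symm)
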